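/- Let Q > 0 and let f : ℝ → ℝ be continuous. Suppose θ : [0,Q] → ℝ is continuous on [0,Q], twice continuously differentiable on (0,Q], and satisfies (ξ²·θ'(ξ))' = ξ²·f(θ(ξ)) for all ξ ∈ (0,Q]. Then lim_{ξ→0⁺} θ'(ξ) = 0. -/

import Mathlib

open Set

/-- A solution of the general Lane–Emden equation `(ξ²θ')' = ξ²·f(θ)` that is
continuous up to the centre must have `θ'(ξ) → 0` as `ξ → 0⁺`. -/
theorem stmt10 (Q : ℝ) (hQ : 0 < Q) (f : ℝ → ℝ) (hf : Continuous f)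
    (θ θ' : ℝ → ℝ)
    (hθ_cont : ContinuousOn θ (Icc 0 Q))
    (hθ_deriv : ∀ ξ ∈ Ioc (0 : ℝ) Q, HasDerivWithinAt θ (θ' ξ) (Ioc 0 Q) ξ)
    (hθ'_cont : ContinuousOn θ' (Ioc 0 Q))
    (hode : ∀ ξ ∈ Ioc (0 : ℝ) Q,
      HasDerivWithinAt (fun s => s ^ 2 * θ' s) (ξ ^ 2 * f (θ ξ)) (Ioc 0 Q) ξ) :
    Filter.Tendsto θ' (nhdsWithin 0 (Ioi 0)) (nhds 0) := by
  set F : ℝ → ℝ := fun s => s ^ 2 * f (θ s) with hFdef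
  set g : ℝ → ℝ := fun s => s ^ 2 * θ' s with hgdef
  have hFc : ContinuousOn F (Icc 0 Q) :=
    (continuousOn_id.pow 2).mul (hf.comp_continuousOn hθ_cont)
  have hgc : ContinuousOn g (Ioc 0 Q) :=
    ((continuousOn_id.pow 2).mono (fun x hx => trivial)).mul hθ'_cont
  obtain ⟨M, hM⟩ := isCompact_Icc.exists_bound_of_continuousOn
    (hf.comp_continuousOn hθ_cont)
  have hM0 : 0 ≤ M := le_trans (norm_nonneg _) (hM 0 ⟨le_refl 0, hQ.le⟩)
  have hnhds : ∀ x ∈ Ioo (0:ℝ) Q, Ioc (0:ℝ) Q ∈ nhds x := fun x hx =>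
    Filter.mem_of_superset (isOpen_Ioo.mem_nhds hx) Ioo_subset_Ioc_self
  have hθD : ∀ x ∈ Ioo (0:ℝ) Q, HasDerivAt θ (θ' x) x := fun x hx =>
    (hθ_deriv x (Ioo_subset_Ioc_self hx)).hasDerivAt (hnhds x hx)
  have hgD : ∀ x ∈ Ioo (0:ℝ) Q, HasDerivAt g (F x) x := fun x hx =>
    (hode x (Ioo_subset_Ioc_self hx)).hasDerivAt (hnhds x hx)
  have hFint : ∀ a b : ℝ, 0 ≤ a → a ≤ b → b ≤ Q →
      IntervalIntegrable F MeasureTheory.volume a b := by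
    intro a b ha hab hb
    apply (hFc.mono ?_).intervalIntegrable
    rw [uIcc_of_le hab]; exact Icc_subset_Icc ha hb
  have hsubIcc : ∀ a b : ℝ, 0 < a → b ≤ Q → Icc a b ⊆ Ioc 0 Q :=
    fun a b ha hb x hx => ⟨lt_of_lt_of_le ha hx.1, hx.2.trans hb⟩
  -- FTC for g
  have hgFTC : ∀ a b : ℝ, 0 < a → a ≤ b → b ≤ Q →
      ∫ s in a..b, F s = g b - g a := by
    intro a b ha hab hb
    refine intervalIntegral.integral_eq_sub_of_hasDeriv_right_of_le hab
      (hgc.mono (hsubIcc a b ha hb)) ?_ (hFint a b ha.le hab hb)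
    intro x hx
    exact (hgD x ⟨ha.trans hx.1, hx.2.trans_le hb⟩).hasDerivWithinAt
  -- FTC for θ
  have hθFTC : ∀ a b : ℝ, 0 < a → a ≤ b → b ≤ Q →
      ∫ s in a..b, θ' s = θ b - θ a := by
    intro a b ha hab hb
    refine intervalIntegral.integral_eq_sub_of_hasDeriv_right_of_le hab
      (hθ_cont.mono (fun x hx => ⟨ha.le.trans hx.1, hx.2.trans hb⟩)) ?_ ?_
    · intro x hx
      exact (hθD x ⟨ha.trans hx.1, hx.2.trans_le hb⟩).hasDerivWithinAt
    · apply (hθ'_cont.mono ?_).intervalIntegrable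
      rw [uIcc_of_le hab]; exact hsubIcc a b ha hb
  set L : ℝ := g Q - ∫ s in (0:ℝ)..Q, F s with hLdef
  have hgL : ∀ b ∈ Ioc (0:ℝ) Q, g b = L + ∫ s in (0:ℝ)..b, F s := by
    intro b hb
    have h1 := hgFTC b Q hb.1 hb.2 le_rfl
    have h2 := intervalIntegral.integral_add_adjacent_intervals
      (hFint 0 b le_rfl hb.1.le hb.2) (hFint b Q hb.1.le hb.2 le_rfl)
    rw [hLdef]; linarith
  -- bound on the integral of F
  have hFbound : ∀ b : ℝ, 0 ≤ b → b ≤ Q →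
      |∫ s in (0:ℝ)..b, F s| ≤ M * b ^ 3 / 3 := by
    intro b hb0 hbQ
    have h1 : ‖∫ s in (0:ℝ)..b, F s‖ ≤ |∫ s in (0:ℝ)..b, M * s ^ 2| := by
      apply intervalIntegral.norm_integral_le_abs_of_norm_le (g := fun s => M * s ^ 2) ?_ ?_
      · filter_upwards [MeasureTheory.ae_restrict_mem measurableSet_uIoc] with t ht
        rw [uIoc_of_le hb0] at ht
        have ht0 : 0 ≤ t := ht.1.le
        have heq : ‖F t‖ = t ^ 2 * ‖f (θ t)‖ := by
          rw [hFdef]; simp [Real.norm_eq_abs, abs_mul,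
            abs_of_nonneg (sq_nonneg t : (0:ℝ) ≤ t^2)]
        rw [heq, mul_comm M (t^2)]
        exact mul_le_mul_of_nonneg_left (hM t ⟨ht0, ht.2.trans hbQ⟩) (sq_nonneg t)
      · apply ContinuousOn.intervalIntegrable
        exact (continuousOn_const.mul (continuousOn_id.pow 2))
    have h2 : ∫ s in (0:ℝ)..b, M * s ^ 2 = M * b ^ 3 / 3 := by
      rw [intervalIntegral.integral_const_mul, integral_pow]; ring
    rw [Real.norm_eq_abs] at h1
    calc |∫ s in (0:ℝ)..b, F s| ≤ |M * b ^ 3 / 3| := by rw [← h2]; exact h1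
      _ = M * b ^ 3 / 3 := abs_of_nonneg (by positivity)
  -- L = 0
  have hL0 : L = 0 := by
    by_contra hL
    obtain ⟨B, hB⟩ := isCompact_Icc.exists_bound_of_continuousOn hθ_cont
    have hB0 : 0 ≤ B := le_trans (norm_nonneg _) (hB 0 ⟨le_refl 0, hQ.le⟩)
    set C : ℝ := 2 * B + |L| / Q + M * Q ^ 2 / 3 + 1 with hCdef
    have hC : 0 < C := by
      have h1 : 0 ≤ |L| / Q := div_nonneg (abs_nonneg _) hQ.le
      have h2 : 0 ≤ M * Q ^ 2 / 3 := by positivity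
      rw [hCdef]; linarith
    set a : ℝ := min Q (|L| / C) with hadef
    have ha0 : 0 < a := lt_min hQ (div_pos (abs_pos.2 hL) hC)
    have haQ : a ≤ Q := min_le_left _ _
    have hamem : a ∈ Ioc (0:ℝ) Q := ⟨ha0, haQ⟩
    -- split the integral of θ'
    have hint1 : IntervalIntegrable (fun s => L / s ^ 2) MeasureTheory.volume a Q := by
      apply ContinuousOn.intervalIntegrable
      apply continuousOn_const.div (continuousOn_id.pow 2)
      intro x hx
      rw [uIcc_of_le haQ] at hx
      exact pow_ne_zero _ (ne_of_gt (lt_of_lt_of_le ha0 hx.1))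
    have hint2 : IntervalIntegrable (fun s => (g s - L) / s ^ 2)
        MeasureTheory.volume a Q := by
      apply ContinuousOn.intervalIntegrable
      apply ContinuousOn.div ?_ (continuousOn_id.pow 2) ?_
      · rw [uIcc_of_le haQ]
        exact (hgc.mono (hsubIcc a Q ha0 le_rfl)).sub continuousOn_const
      · intro x hx
        rw [uIcc_of_le haQ] at hx
        exact pow_ne_zero _ (ne_of_gt (lt_of_lt_of_le ha0 hx.1))
    have hsplit : θ Q - θ a =
        (∫ s in a..Q, L / s ^ 2) + ∫ s in a..Q, (g s - L) / s ^ 2 := by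
      rw [← intervalIntegral.integral_add hint1 hint2, ← hθFTC a Q ha0 haQ le_rfl]
      apply intervalIntegral.integral_congr
      intro s hs
      rw [uIcc_of_le haQ] at hs
      have hs0 : (0:ℝ) < s := lt_of_lt_of_le ha0 hs.1
      show θ' s = L / s ^ 2 + (g s - L) / s ^ 2
      have hgs : g s = s ^ 2 * θ' s := rfl
      rw [hgs, ← add_div, eq_div_iff (pow_ne_zero 2 hs0.ne')]
      ring
    have hI1 : (∫ s in a..Q, L / s ^ 2) = L / a - L / Q := by
      have := intervalIntegral.integral_eq_sub_of_hasDerivAt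
        (f := fun s => -L / s) (f' := fun s => L / s ^ 2) (a := a) (b := Q) ?_ hint1
      · rw [this]; ring
      · intro x hx
        rw [uIcc_of_le haQ] at hx
        have hx0 : x ≠ 0 := ne_of_gt (lt_of_lt_of_le ha0 hx.1)
        have h := (hasDerivAt_inv hx0).const_mul (-L)
        simp only [div_eq_mul_inv]
        exact h.congr_deriv (by ring)
    have hI2 : |∫ s in a..Q, (g s - L) / s ^ 2| ≤ M * Q / 3 * |Q - a| := by
      rw [← Real.norm_eq_abs (∫ s in a..Q, (g s - L) / s ^ 2)]
      apply intervalIntegral.norm_integral_le_of_norm_le_const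
      intro t ht
      rw [uIoc_of_le haQ] at ht
      have ht0 : 0 < t := lt_of_lt_of_le ha0 ht.1.le
      have htQ : t ≤ Q := ht.2
      have hgt : g t - L = ∫ s in (0:ℝ)..t, F s := by
        rw [hgL t ⟨ht0, htQ⟩]; ring
      have h1 : |g t - L| ≤ M * t ^ 3 / 3 := by
        rw [hgt]; exact hFbound t ht0.le htQ
      have h2 : ‖(g t - L) / t ^ 2‖ = |g t - L| / t ^ 2 := by
        rw [Real.norm_eq_abs, abs_div, abs_of_nonneg (sq_nonneg t : (0:ℝ) ≤ t ^ 2)]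
      rw [h2]
      rw [div_le_iff₀ (by positivity : (0:ℝ) < t ^ 2)]
      have h5 : 0 ≤ (M * Q - M * t) * t ^ 2 := by
        apply mul_nonneg ?_ (sq_nonneg t)
        have := mul_le_mul_of_nonneg_left htQ hM0
        linarith
      calc |g t - L| ≤ M * t ^ 3 / 3 := h1
        _ = M * t / 3 * t ^ 2 := by ring
        _ ≤ M * Q / 3 * t ^ 2 := by nlinarith [h5]
    have hRa : |Q - a| ≤ Q := by rw [abs_of_nonneg (by linarith)]; linarith
    have hbnd : |L| / a ≤ 2 * B + |L| / Q + M * Q ^ 2 / 3 := by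
      have hθQ : |θ Q| ≤ B := hB Q ⟨hQ.le, le_rfl⟩
      have hθa : |θ a| ≤ B := hB a ⟨ha0.le, haQ⟩
      have h1 : |θ Q - θ a| ≤ 2 * B := by
        calc |θ Q - θ a| ≤ |θ Q| + |θ a| := abs_sub _ _
          _ ≤ 2 * B := by linarith
      have h2 : M * Q / 3 * |Q - a| ≤ M * Q ^ 2 / 3 := by
        calc M * Q / 3 * |Q - a| ≤ M * Q / 3 * Q :=
              mul_le_mul_of_nonneg_left hRa (by positivity)
          _ = M * Q ^ 2 / 3 := by ring
      have h3 : |L / a - L / Q| ≤ |θ Q - θ a| + |∫ s in a..Q, (g s - L) / s ^ 2| := by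
        have he : L / a - L / Q = (θ Q - θ a) - ∫ s in a..Q, (g s - L) / s ^ 2 := by
          rw [hsplit, hI1]; ring
        rw [he]
        exact abs_sub _ _
      have h4 : |L| / a - |L| / Q ≤ |L / a - L / Q| := by
        have e1 : |L| / a = |L / a| := by
          rw [abs_div, abs_of_nonneg ha0.le]
        have e2 : |L| / Q = |L / Q| := by
          rw [abs_div, abs_of_nonneg hQ.le]
        rw [e1, e2]
        exact abs_sub_abs_le_abs_sub _ _
      linarith
    have hCa : C ≤ |L| / a := by
      have h1 : a ≤ |L| / C := min_le_right _ _
      rw [le_div_iff₀ ha0]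
      rw [le_div_iff₀ hC] at h1
      linarith [mul_comm a C]
    rw [hCdef] at hCa
    linarith
  -- final squeeze
  have hev : ∀ᶠ b in nhdsWithin (0:ℝ) (Ioi 0), b ∈ Ioc (0:ℝ) Q :=
    Ioc_mem_nhdsGT_of_mem ⟨le_refl 0, hQ⟩
  rw [tendsto_zero_iff_abs_tendsto_zero]
  apply squeeze_zero' (Filter.Eventually.of_forall fun t => abs_nonneg _)
    (g := fun b => M * b / 3)
  · filter_upwards [hev] with b hb
    have hb2 : (0:ℝ) < b ^ 2 := pow_pos hb.1 2
    have hgb : g b = ∫ s in (0:ℝ)..b, F s := by rw [hgL b hb, hL0]; ring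
    have hθ'b : θ' b = g b / b ^ 2 := by
      have : g b = b ^ 2 * θ' b := rfl
      rw [this, mul_div_cancel_left₀ _ hb2.ne']
    rw [hθ'b, abs_div, abs_of_nonneg hb2.le, div_le_iff₀ hb2, hgb]
    calc |∫ s in (0:ℝ)..b, F s| ≤ M * b ^ 3 / 3 := hFbound b hb.1.le hb.2
      _ = M * b / 3 * b ^ 2 := by ring
  · have hc : Continuous (fun b : ℝ => M * b / 3) :=
      (continuous_const.mul continuous_id).div_const 3
    have : Filter.Tendsto (fun b : ℝ => M * b / 3) (nhds 0) (nhds 0) := by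
      have := hc.tendsto (0:ℝ)
      simpa using this
    exact this.mono_left nhdsWithin_le_nhds
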